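/- For a domain X, every Scott-open filter on FX (the domain of Scott-open filters of X) is an evaluation: if 𝒜 is a Scott-open filter of the poset FX, then there exists x ∈ X such that 𝒜 = {α ∈ FX : x ∈ α}; moreover x can be taken to be sup of the ideal ψ_𝒜 = {z ∈ X : ∃ α ∈ 𝒜, α ⊆ ↑z}. -/
import Mathlib


def IsDcpoP (X : Type*) [Preorder X] : Prop :=
  ∀ D : Set X, D.Nonempty → DirectedOn (· ≤ ·) D → ∃ s, IsLUB D s

def wayBelow {X : Type*} [Preorder X] (y x : X) : Prop :=
  ∀ D : Set X, D.Nonempty → DirectedOn (· ≤ ·) D →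
    ∀ s, IsLUB D s → x ≤ s → ∃ d ∈ D, y ≤ d

/-- A domain: a continuous dcpo. -/
def IsContDomain (X : Type*) [Preorder X] : Prop :=
  IsDcpoP X ∧
  ∀ x : X, ({y | wayBelow y x}).Nonempty ∧
    DirectedOn (· ≤ ·) {y | wayBelow y x} ∧ IsLUB {y | wayBelow y x} x

def IsScottOpenFilter {X : Type*} [Preorder X] (α : Set X) : Prop :=
  α.Nonempty ∧
  (∀ ⦃a b : X⦄, a ≤ b → a ∈ α → b ∈ α) ∧
  (∀ a ∈ α, ∀ b ∈ α, ∃ c ∈ α, c ≤ a ∧ c ≤ b) ∧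
  (∀ D : Set X, D.Nonempty → DirectedOn (· ≤ ·) D →
    ∀ s, IsLUB D s → s ∈ α → ∃ d ∈ D, d ∈ α)

/-- The poset of Scott-open filters of `X`, ordered by inclusion. -/
abbrev SOF (X : Type*) [Preorder X] := {α : Set X // IsScottOpenFilter α}

section Aux

variable {X : Type*} [PartialOrder X]

lemma wayBelow_le {y x : X} (h : wayBelow y x) : y ≤ x := by
  obtain ⟨d, hd, hyd⟩ := h {x} ⟨x, rfl⟩
    (fun a ha b hb => ⟨x, rfl, by simp_all, by simp_all⟩) x isLUB_singleton le_rfl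
  simp only [Set.mem_singleton_iff] at hd
  exact hd ▸ hyd

lemma le_wayBelow {a b c : X} (hab : a ≤ b) (h : wayBelow b c) : wayBelow a c :=
  fun D hD hdir s hs hcs => (h D hD hdir s hs hcs).imp fun d hd => ⟨hd.1, hab.trans hd.2⟩

lemma wayBelow_le_trans {a b c : X} (h : wayBelow a b) (hbc : b ≤ c) : wayBelow a c :=
  fun D hD hdir s hs hcs => h D hD hdir s hs (hbc.trans hcs)

lemma interpolation (hX : IsContDomain X) {z x : X} (h : wayBelow z x) :
    ∃ w, wayBelow z w ∧ wayBelow w x := by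
  set D : Set X := {u | ∃ w, wayBelow u w ∧ wayBelow w x} with hD
  have hne : D.Nonempty := by
    obtain ⟨w, hw⟩ := (hX.2 x).1
    obtain ⟨u, hu⟩ := (hX.2 w).1
    exact ⟨u, w, hu, hw⟩
  have hdir : DirectedOn (· ≤ ·) D := by
    rintro u₁ ⟨w₁, hu₁, hw₁⟩ u₂ ⟨w₂, hu₂, hw₂⟩
    obtain ⟨w₃, hw₃, h13, h23⟩ := (hX.2 x).2.1 w₁ hw₁ w₂ hw₂
    have hu₁' : wayBelow u₁ w₃ := wayBelow_le_trans hu₁ h13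
    have hu₂' : wayBelow u₂ w₃ := wayBelow_le_trans hu₂ h23
    obtain ⟨u₃, hu₃, g1, g2⟩ := (hX.2 w₃).2.1 u₁ hu₁' u₂ hu₂'
    exact ⟨u₃, ⟨w₃, hu₃, hw₃⟩, g1, g2⟩
  have hlub : IsLUB D x := by
    constructor
    · rintro u ⟨w, hu, hw⟩
      exact (wayBelow_le hu).trans (wayBelow_le hw)
    · intro b hb
      have hub : ∀ w ∈ {w | wayBelow w x}, w ≤ b := by
        intro w hw
        refine (hX.2 w).2.2.2 ?_
        intro u hu
        exact hb ⟨w, hu, hw⟩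
      exact (hX.2 x).2.2.2 hub
  obtain ⟨d, ⟨w, hdw, hwx⟩, hzd⟩ := h D hne hdir x hlub le_rfl
  exact ⟨w, le_wayBelow hzd hdw, hwx⟩

lemma chain_filter (hX : IsContDomain X) {z x : X} (h : wayBelow z x) :
    ∃ F : Set X, IsScottOpenFilter F ∧ x ∈ F ∧ F ⊆ {y | z ≤ y} := by
  classical
  have interp : ∀ w : {w : X // wayBelow z w}, ∃ w' : {w : X // wayBelow z w},
      wayBelow w'.1 w.1 := by
    rintro ⟨w, hw⟩
    obtain ⟨w', h1, h2⟩ := interpolation hX hw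
    exact ⟨⟨w', h1⟩, h2⟩
  choose g hg using interp
  let c : ℕ → {w : X // wayBelow z w} := fun n => Nat.rec ⟨x, h⟩ (fun _ p => g p) n
  have hc : ∀ n, wayBelow (c (n + 1)).1 (c n).1 := fun n => hg (c n)
  have hantitone : ∀ m n, m ≤ n → (c n).1 ≤ (c m).1 := by
    intro m n hmn
    induction n with
    | zero => simp_all
    | succ k ih =>
      rcases Nat.lt_or_ge m (k+1) with hlt | hge
      · exact (wayBelow_le (hc k)).trans (ih (Nat.lt_succ_iff.mp hlt))
      · have : m = k + 1 := le_antisymm hmn hge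
        simp [this]
  refine ⟨{y | ∃ n, (c (n + 1)).1 ≤ y}, ⟨⟨x, 0, wayBelow_le (hc 0)⟩, ?_, ?_, ?_⟩,
    ⟨0, wayBelow_le (hc 0)⟩, ?_⟩
  · rintro a b hab ⟨n, hn⟩
    exact ⟨n, hn.trans hab⟩
  · rintro a ⟨n, hn⟩ b ⟨m, hm⟩
    refine ⟨(c (max n m + 1)).1, ⟨max n m + 1, wayBelow_le (hc (max n m + 1))⟩, ?_, ?_⟩
    · exact (hantitone (n+1) (max n m + 1) (by omega)).trans hn
    · exact (hantitone (m+1) (max n m + 1) (by omega)).trans hm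
  · rintro D hD hdir s hs ⟨n, hn⟩
    have : wayBelow (c (n + 2)).1 s := wayBelow_le_trans (hc (n+1)) hn
    obtain ⟨d, hd, hled⟩ := this D hD hdir s hs le_rfl
    exact ⟨d, hd, n + 1, hled⟩
  · rintro y ⟨n, hn⟩
    exact (wayBelow_le (c (n+1)).2).trans hn

lemma exists_wayBelow_mem (hX : IsContDomain X) {α : Set X} (hα : IsScottOpenFilter α)
    {x : X} (hx : x ∈ α) : ∃ z ∈ α, wayBelow z x := by
  obtain ⟨z, hz1, hz2⟩ := hα.2.2.2 {y | wayBelow y x} (hX.2 x).1 (hX.2 x).2.1 x (hX.2 x).2.2 hx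
  exact ⟨z, hz2, hz1⟩

lemma sof_union3 {F₁ F₂ G : Set X} (h₁ : IsScottOpenFilter F₁) (h₂ : IsScottOpenFilter F₂)
    (hG : IsScottOpenFilter G) {z z₁ z₂ : X} (hzG : z ∈ G)
    (hF₁ : F₁ ⊆ {y | z₁ ≤ y}) (hF₂ : F₂ ⊆ {y | z₂ ≤ y}) (hz1 : z ≤ z₁) (hz2 : z ≤ z₂) :
    IsScottOpenFilter (F₁ ∪ F₂ ∪ G) := by
  refine ⟨⟨z, Or.inr hzG⟩, ?_, ?_, ?_⟩
  · rintro a b hab (⟨h | h⟩ | h)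
    · exact Or.inl (Or.inl (h₁.2.1 hab h))
    · exact Or.inl (Or.inr (h₂.2.1 hab h))
    · exact Or.inr (hG.2.1 hab h)
  · have key : ∀ a ∈ F₁ ∪ F₂, z ≤ a := by
      rintro a (h | h)
      · exact hz1.trans (hF₁ h)
      · exact hz2.trans (hF₂ h)
    rintro a ha b hb
    rcases ha with ha | ha
    · rcases hb with hb | hb
      · rcases ha with ha | ha
        · rcases hb with hb | hb
          · obtain ⟨c, hc, g⟩ := h₁.2.2.1 a ha b hb
            exact ⟨c, Or.inl (Or.inl hc), g⟩
          · exact ⟨z, Or.inr hzG, key a (Or.inl ha), key b (Or.inr hb)⟩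
        · rcases hb with hb | hb
          · exact ⟨z, Or.inr hzG, key a (Or.inr ha), key b (Or.inl hb)⟩
          · obtain ⟨c, hc, g⟩ := h₂.2.2.1 a ha b hb
            exact ⟨c, Or.inl (Or.inr hc), g⟩
      · obtain ⟨c, hc, g1, g2⟩ := hG.2.2.1 z hzG b hb
        exact ⟨c, Or.inr hc, g1.trans (key a ha), g2⟩
    · rcases hb with hb | hb
      · obtain ⟨c, hc, g1, g2⟩ := hG.2.2.1 z hzG a ha
        exact ⟨c, Or.inr hc, g2, g1.trans (key b hb)⟩
      · obtain ⟨c, hc, g⟩ := hG.2.2.1 a ha b hb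
        exact ⟨c, Or.inr hc, g⟩
  · rintro D hD hdir s hs (⟨h | h⟩ | h)
    · obtain ⟨d, hd, hd'⟩ := h₁.2.2.2 D hD hdir s hs h
      exact ⟨d, hd, Or.inl (Or.inl hd')⟩
    · obtain ⟨d, hd, hd'⟩ := h₂.2.2.2 D hD hdir s hs h
      exact ⟨d, hd, Or.inl (Or.inr hd')⟩
    · obtain ⟨d, hd, hd'⟩ := hG.2.2.2 D hD hdir s hs h
      exact ⟨d, hd, Or.inr hd'⟩

lemma lemmaC (hX : IsContDomain X) {𝒜 : Set (SOF X)} (h𝒜 : IsScottOpenFilter 𝒜)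
    {α : SOF X} (hα : α ∈ 𝒜) : ∃ z ∈ α.1, ∃ β ∈ 𝒜, β.1 ⊆ {y | z ≤ y} := by
  set 𝔇 : Set (SOF X) := {F | ∃ z ∈ α.1, F.1 ⊆ {y | z ≤ y}} with h𝔇
  have hmem : ∀ x ∈ α.1, ∃ F ∈ 𝔇, x ∈ F.1 := by
    intro x hx
    obtain ⟨z, hz, hzx⟩ := exists_wayBelow_mem hX α.2 hx
    obtain ⟨F, hF, hxF, hFsub⟩ := chain_filter hX hzx
    exact ⟨⟨F, hF⟩, ⟨z, hz, hFsub⟩, hxF⟩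
  have hne : 𝔇.Nonempty := by
    obtain ⟨x, hx⟩ := α.2.1
    obtain ⟨F, hF, _⟩ := hmem x hx
    exact ⟨F, hF⟩
  have hdir : DirectedOn (· ≤ ·) 𝔇 := by
    rintro F₁ ⟨z₁, hz₁, hsub₁⟩ F₂ ⟨z₂, hz₂, hsub₂⟩
    obtain ⟨z, hz, hle₁, hle₂⟩ := α.2.2.2.1 z₁ hz₁ z₂ hz₂
    obtain ⟨z', hz', hz'z⟩ := exists_wayBelow_mem hX α.2 hz
    obtain ⟨G, hG, hzG, hGsub⟩ := chain_filter hX hz'z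
    refine ⟨⟨F₁.1 ∪ F₂.1 ∪ G,
      sof_union3 F₁.2 F₂.2 hG hzG hsub₁ hsub₂ hle₁ hle₂⟩, ⟨z', hz', ?_⟩, ?_, ?_⟩
    · rintro y (⟨h | h⟩ | h)
      · exact ((wayBelow_le hz'z).trans hle₁).trans (hsub₁ h)
      · exact ((wayBelow_le hz'z).trans hle₂).trans (hsub₂ h)
      · exact hGsub h
    · exact fun y hy => Or.inl (Or.inl hy)
    · exact fun y hy => Or.inl (Or.inr hy)
  have hlub : IsLUB 𝔇 α := by
    constructor
    · rintro F ⟨z, hz, hsub⟩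
      exact fun y hy => α.2.2.1 (hsub hy) hz
    · intro γ hγ x hx
      obtain ⟨F, hF, hxF⟩ := hmem x hx
      exact hγ hF hxF
  obtain ⟨F, ⟨z, hz, hsub⟩, hF𝒜⟩ := h𝒜.2.2.2 𝔇 hne hdir α hlub hα
  exact ⟨z, hz, F, hF𝒜, hsub⟩

end Aux
/-- For a domain `X`, every Scott-open filter `𝒜` on `FX` is an evaluation:
`𝒜 = {α ∈ FX | x ∈ α}` where `x` is the supremum of the ideal
`ψ_𝒜 = {z | ∃ α ∈ 𝒜, α ⊆ ↑z}`. -/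
theorem stmt_17 {X : Type*} [PartialOrder X] (hX : IsContDomain X)
    (𝒜 : Set (SOF X)) (h𝒜 : IsScottOpenFilter 𝒜) :
    ∃ x : X,
      ({z : X | ∃ α ∈ 𝒜, α.1 ⊆ {y | z ≤ y}}).Nonempty ∧
      DirectedOn (· ≤ ·) {z : X | ∃ α ∈ 𝒜, α.1 ⊆ {y | z ≤ y}} ∧
      (∀ ⦃a b : X⦄, a ≤ b → (∃ α ∈ 𝒜, α.1 ⊆ {y | b ≤ y}) →
        ∃ α ∈ 𝒜, α.1 ⊆ {y | a ≤ y}) ∧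
      IsLUB {z : X | ∃ α ∈ 𝒜, α.1 ⊆ {y | z ≤ y}} x ∧
      𝒜 = {α : SOF X | x ∈ α.1} := by
  set ψ : Set X := {z : X | ∃ α ∈ 𝒜, α.1 ⊆ {y | z ≤ y}} with hψ
  have hne : ψ.Nonempty := by
    obtain ⟨α, hα⟩ := h𝒜.1
    obtain ⟨z, _, β, hβ, hsub⟩ := lemmaC hX h𝒜 hα
    exact ⟨z, β, hβ, hsub⟩
  have hdir : DirectedOn (· ≤ ·) ψ := by
    rintro z₁ ⟨α₁, hα₁, hsub₁⟩ z₂ ⟨α₂, hα₂, hsub₂⟩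
    obtain ⟨β, hβ, hle₁, hle₂⟩ := h𝒜.2.2.1 α₁ hα₁ α₂ hα₂
    obtain ⟨z, hz, γ, hγ, hsub⟩ := lemmaC hX h𝒜 hβ
    exact ⟨z, ⟨γ, hγ, hsub⟩, hsub₁ (hle₁ hz), hsub₂ (hle₂ hz)⟩
  obtain ⟨x, hx⟩ := hX.1 ψ hne hdir
  refine ⟨x, hne, hdir, ?_, hx, ?_⟩
  · rintro a b hab ⟨α, hα, hsub⟩
    exact ⟨α, hα, fun y hy => hab.trans (hsub hy)⟩
  · apply Set.Subset.antisymm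
    · intro α hα
      obtain ⟨z, hz, β, hβ, hsub⟩ := lemmaC hX h𝒜 hα
      have hzψ : z ∈ ψ := ⟨β, hβ, hsub⟩
      exact α.2.2.1 (hx.1 hzψ) hz
    · intro α hα
      obtain ⟨z, hzψ, hzα⟩ := α.2.2.2.2 ψ hne hdir x hx hα
      obtain ⟨β, hβ, hsub⟩ := hzψ
      have : β ≤ α := fun y hy => α.2.2.1 (hsub hy) hzα
      exact h𝒜.2.1 this hβ
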